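/- Let G be an unweighted, connected simple graph on n ≥ 2 vertices, v a vertex, and r ≥ 1 an integer such that vol(B(v,r)) ≤ vol(V)/2. Then Σ_{i=0}^{r−1} φ(B(v,i)) ≤ 2 · log(vol(B(v,r))) ≤ 4 · log n, where log denotes the natural logarithm. -/

import Mathlib

open Finset Real

variable {V : Type*} [Fintype V] [DecidableEq V]

/-- The normalized Laplacian `I - D^{-1/2} A D^{-1/2}` of a simple graph. -/
noncomputable def normLap (G : SimpleGraph V) [DecidableRel G.Adj] : Matrix V V ℝ :=
  1 - Matrix.diagonal (fun v => (Real.sqrt (G.degree v))⁻¹) * G.adjMatrix ℝ *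
    Matrix.diagonal (fun v => (Real.sqrt (G.degree v))⁻¹)

lemma normLap_isHermitian (G : SimpleGraph V) [DecidableRel G.Adj] :
    (normLap G).IsHermitian := by
  unfold normLap
  apply Matrix.IsHermitian.sub (Matrix.isHermitian_one)
  rw [Matrix.IsHermitian, Matrix.conjTranspose_eq_transpose_of_trivial,
    Matrix.transpose_mul, Matrix.transpose_mul, Matrix.diagonal_transpose,
    G.transpose_adjMatrix, Matrix.mul_assoc]

/-- The `k`-th smallest eigenvalue (1-indexed) of the normalized Laplacian. -/
noncomputable def normLapEigenvalue (G : SimpleGraph V) [DecidableRel G.Adj]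
    (k : ℕ) (hk : k - 1 < Fintype.card V) : ℝ :=
  let f : Fin (Fintype.card V) → ℝ :=
    (normLap_isHermitian G).eigenvalues ∘ (Fintype.equivFin V).symm
  (f ∘ Tuple.sort f) ⟨k - 1, hk⟩

/-- Volume of a set of vertices: sum of degrees. -/
def vol (G : SimpleGraph V) [DecidableRel G.Adj] (S : Finset V) : ℕ :=
  ∑ v ∈ S, G.degree v

/-- Number of edges with exactly one endpoint in `S`. -/
def cut (G : SimpleGraph V) [DecidableRel G.Adj] (S : Finset V) : ℕ :=
  ((S ×ˢ Sᶜ).filter fun p => G.Adj p.1 p.2).card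

/-- Conductance of a set of vertices. -/
noncomputable def conductance (G : SimpleGraph V) [DecidableRel G.Adj] (S : Finset V) : ℝ :=
  (cut G S : ℝ) / min (vol G S) (vol G Sᶜ)

/-- Ball of radius `r` around a vertex in graph distance. -/
noncomputable def ball (G : SimpleGraph V) (v : V) (r : ℕ) : Finset V :=
  Finset.univ.filter fun u => G.dist v u ≤ r

/-- Set of vertices at distance at most `r` from a set `S`. -/
noncomputable def ballSet (G : SimpleGraph V) (S : Finset V) (r : ℕ) : Finset V :=
  Finset.univ.filter fun u => ∃ w ∈ S, G.dist w u ≤ r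

/-- Exterior neighborhood of `S`: vertices outside `S` adjacent to some vertex of `S`. -/
def nbhd (G : SimpleGraph V) [DecidableRel G.Adj] (S : Finset V) : Finset V :=
  Finset.univ.filter fun u => u ∉ S ∧ ∃ w ∈ S, G.Adj w u

section Aux

variable (G : SimpleGraph V) [DecidableRel G.Adj]

lemma my_ball_mono (v : V) {i j : ℕ} (h : i ≤ j) : ball G v i ⊆ ball G v j := by
  intro u hu
  simp only [ball, mem_filter, mem_univ, true_and] at *
  omega

lemma my_vol_mono {S T : Finset V} (h : S ⊆ T) : vol G S ≤ vol G T :=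
  Finset.sum_le_sum_of_subset h

lemma my_vol_add_compl (S : Finset V) : vol G S + vol G Sᶜ = vol G Finset.univ := by
  simpa [vol] using Finset.sum_add_sum_compl S (fun u => G.degree u)

lemma my_cut_eq_sum (S : Finset V) :
    cut G S = ∑ w ∈ S, ∑ u ∈ Sᶜ, if G.Adj w u then 1 else 0 := by
  unfold cut
  rw [Finset.card_filter, Finset.sum_product]

lemma my_inner_le_degree (w : V) (T : Finset V) :
    (∑ u ∈ T, if G.Adj w u then 1 else 0) ≤ G.degree w := by
  calc (∑ u ∈ T, if G.Adj w u then 1 else 0)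
      ≤ ∑ u ∈ Finset.univ, if G.Adj w u then 1 else 0 :=
        Finset.sum_le_sum_of_subset (Finset.subset_univ T)
    _ = (Finset.univ.filter fun u => G.Adj w u).card := (Finset.card_filter _ _).symm
    _ = G.degree w := by
        rw [SimpleGraph.degree]; congr 1; ext u
        simp [SimpleGraph.mem_neighborFinset]

lemma my_cut_le_vol (S : Finset V) : cut G S ≤ vol G S := by
  rw [my_cut_eq_sum]
  exact Finset.sum_le_sum fun w _ => my_inner_le_degree G w Sᶜ

lemma my_mem_ball_self (v : V) (i : ℕ) : v ∈ ball G v i := by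
  simp [ball, SimpleGraph.dist_self]

lemma my_degree_pos (hG : G.Connected) (hn : 2 ≤ Fintype.card V) (u : V) :
    0 < G.degree u := by
  obtain ⟨w, hw⟩ := Fintype.exists_ne_of_one_lt_card (by omega) u
  rw [SimpleGraph.degree_pos_iff_exists_adj]
  obtain ⟨p⟩ := hG.preconnected u w
  cases p with
  | nil => exact absurd rfl hw.symm
  | cons h _ => exact ⟨_, h⟩

lemma my_vol_ball_pos (hG : G.Connected) (hn : 2 ≤ Fintype.card V) (v : V) (i : ℕ) :
    1 ≤ vol G (ball G v i) := by
  calc 1 ≤ G.degree v := my_degree_pos G hG hn v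
    _ ≤ vol G (ball G v i) :=
        Finset.single_le_sum (f := fun u => G.degree u) (fun _ _ => Nat.zero_le _)
          (my_mem_ball_self G v i)

lemma my_cut_ball_le (hG : G.Connected) (v : V) (i : ℕ) :
    cut G (ball G v i) + vol G (ball G v i) ≤ vol G (ball G v (i + 1)) := by
  have hsub : ball G v i ⊆ ball G v (i + 1) := my_ball_mono G v (Nat.le_succ i)
  have key : cut G (ball G v i) ≤ ∑ u ∈ ball G v (i+1) \ ball G v i, G.degree u := by
    rw [my_cut_eq_sum, Finset.sum_comm]
    have hz : ∀ u ∈ (ball G v i)ᶜ, u ∉ ball G v (i+1) \ ball G v i →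
        (∑ w ∈ ball G v i, if G.Adj w u then 1 else 0) = 0 := by
      intro u hu hu2
      rw [Finset.sum_eq_zero]
      intro w hw
      rw [if_neg]
      intro hadj
      apply hu2
      rw [Finset.mem_compl] at hu
      refine Finset.mem_sdiff.2 ⟨?_, hu⟩
      simp only [ball, mem_filter, mem_univ, true_and] at hw ⊢
      have h1 : G.dist v u ≤ G.dist v w + G.dist w u := hG.dist_triangle
      have h2 : G.dist w u ≤ 1 := by
        simpa using SimpleGraph.dist_le (SimpleGraph.Walk.cons hadj SimpleGraph.Walk.nil)
      omega
    have hsub2 : ball G v (i+1) \ ball G v i ⊆ (ball G v i)ᶜ := by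
      intro u hu
      rw [Finset.mem_compl]
      exact (Finset.mem_sdiff.1 hu).2
    rw [← Finset.sum_subset hsub2 hz]
    refine Finset.sum_le_sum fun u _ => ?_
    calc (∑ w ∈ ball G v i, if G.Adj w u then 1 else 0)
        = ∑ w ∈ ball G v i, if G.Adj u w then 1 else 0 := by
          simp_rw [SimpleGraph.adj_comm]
      _ ≤ G.degree u := my_inner_le_degree G u (ball G v i)
  have hsd : (∑ u ∈ ball G v (i+1) \ ball G v i, G.degree u) + vol G (ball G v i)
      = vol G (ball G v (i+1)) := Finset.sum_sdiff hsub
  omega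

lemma div_le_div_of_nonneg_right' {x y c : ℝ} (h : x ≤ y) (hc : 0 < c) :
    x / c ≤ y / c := by
  apply div_le_div_of_nonneg_right h hc.le

lemma my_min_div_le {a b : ℝ} (hb : 1 ≤ b) (hab : b ≤ a) :
    min b (a - b) / b ≤ 2 * (Real.log a - Real.log b) := by
  have hb0 : (0:ℝ) < b := by linarith
  have ha0 : (0:ℝ) < a := by linarith
  have hx0 : (0:ℝ) < a / b := div_pos ha0 hb0
  have hx1 : 1 ≤ a / b := (one_le_div hb0).2 hab
  rw [← Real.log_div (ne_of_gt ha0) (ne_of_gt hb0)]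
  rcases le_or_gt a (2 * b) with h | h
  · have h1 : 1 - (a / b)⁻¹ ≤ Real.log (a / b) := Real.one_sub_inv_le_log_of_pos hx0
    have hinv : (a / b)⁻¹ = b / a := by rw [inv_div]
    rw [hinv] at h1
    have h2 : a / b - 1 ≤ 2 * (1 - b / a) := by
      have e1 : a / b - 1 = (a - b) / b := by field_simp
      have e2 : 2 * (1 - b / a) = 2 * (a - b) / a := by field_simp
      rw [e1, e2, div_le_div_iff₀ hb0 ha0]
      nlinarith
    calc min b (a - b) / b ≤ (a - b) / b := by
          exact div_le_div_of_nonneg_right' (min_le_right _ _) hb0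
      _ = a / b - 1 := by field_simp
      _ ≤ 2 * (1 - b / a) := h2
      _ ≤ 2 * Real.log (a / b) := by linarith
  · have hlog2 : Real.log 2 ≤ Real.log (a / b) := by
      apply Real.log_le_log (by norm_num)
      rw [le_div_iff₀ hb0]; linarith
    have h2 : (0.6931471803 : ℝ) < Real.log 2 := Real.log_two_gt_d9
    calc min b (a - b) / b ≤ b / b := by
          exact div_le_div_of_nonneg_right' (min_le_left _ _) hb0
      _ = 1 := div_self (ne_of_gt hb0)
      _ ≤ 2 * Real.log (a / b) := by linarith

end Aux

/-- `Σ_{i<r} φ(B(v,i)) ≤ 2 log(vol(B(v,r))) ≤ 4 log n`. -/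
theorem sum_conductance_balls_le (G : SimpleGraph V) [DecidableRel G.Adj] (hG : G.Connected)
    (hn : 2 ≤ Fintype.card V) (v : V) (r : ℕ) (hr : 1 ≤ r)
    (hvol : (vol G (ball G v r) : ℝ) ≤ (vol G Finset.univ : ℝ) / 2) :
    (∑ i ∈ Finset.range r, conductance G (ball G v i)) ≤
        2 * Real.log (vol G (ball G v r)) ∧
      2 * Real.log (vol G (ball G v r)) ≤ 4 * Real.log (Fintype.card V) := by
  have hb : ∀ i, 1 ≤ vol G (ball G v i) := my_vol_ball_pos G hG hn v
  have hbr : (1:ℝ) ≤ (vol G (ball G v r) : ℝ) := by exact_mod_cast hb r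
  constructor
  · have key : ∀ i ∈ Finset.range r, conductance G (ball G v i) ≤
        2 * (Real.log (vol G (ball G v (i+1))) - Real.log (vol G (ball G v i))) := by
      intro i hi
      rw [Finset.mem_range] at hi
      have hb1 : (1:ℝ) ≤ (vol G (ball G v i) : ℝ) := by exact_mod_cast hb i
      have hb0 : (0:ℝ) < (vol G (ball G v i) : ℝ) := by linarith
      have hab : (vol G (ball G v i) : ℝ) ≤ (vol G (ball G v (i+1)) : ℝ) := by
        exact_mod_cast my_vol_mono G (my_ball_mono G v (Nat.le_succ i))
      have hcut1 : (cut G (ball G v i) : ℝ) ≤ (vol G (ball G v i) : ℝ) := by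
        exact_mod_cast my_cut_le_vol G _
      have hcut2 : (cut G (ball G v i) : ℝ) + (vol G (ball G v i) : ℝ)
          ≤ (vol G (ball G v (i+1)) : ℝ) := by
        exact_mod_cast my_cut_ball_le G hG v i
      have hcompl : (vol G (ball G v i) : ℝ) + (vol G (ball G v i)ᶜ : ℝ)
          = (vol G Finset.univ : ℝ) := by
        exact_mod_cast my_vol_add_compl G (ball G v i)
      have hhalf : (vol G (ball G v i) : ℝ) ≤ (vol G Finset.univ : ℝ) / 2 := by
        refine le_trans ?_ hvol
        exact_mod_cast my_vol_mono G (my_ball_mono G v (le_of_lt hi))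
      have hle : (vol G (ball G v i) : ℝ) ≤ ((vol G (ball G v i)ᶜ : ℕ) : ℝ) := by
        linarith
      have hleN : vol G (ball G v i) ≤ vol G (ball G v i)ᶜ := by exact_mod_cast hle
      have hmin : min (vol G (ball G v i)) (vol G (ball G v i)ᶜ)
          = vol G (ball G v i) := min_eq_left hleN
      rw [conductance, hmin]
      calc (cut G (ball G v i) : ℝ) / (vol G (ball G v i) : ℝ)
          ≤ min ((vol G (ball G v i) : ℕ) : ℝ)
              ((vol G (ball G v (i+1)) : ℝ) - (vol G (ball G v i) : ℝ))
              / (vol G (ball G v i) : ℝ) := by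
            apply div_le_div_of_nonneg_right' _ hb0
            exact le_min hcut1 (by linarith)
        _ ≤ 2 * (Real.log (vol G (ball G v (i+1))) - Real.log (vol G (ball G v i))) :=
            my_min_div_le hb1 hab
    calc (∑ i ∈ Finset.range r, conductance G (ball G v i))
        ≤ ∑ i ∈ Finset.range r,
            2 * (Real.log (vol G (ball G v (i+1))) - Real.log (vol G (ball G v i))) :=
          Finset.sum_le_sum key
      _ = 2 * (Real.log (vol G (ball G v r)) - Real.log (vol G (ball G v 0))) := by
          rw [← Finset.mul_sum,
            Finset.sum_range_sub (fun i => Real.log (vol G (ball G v i)))]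
      _ ≤ 2 * Real.log (vol G (ball G v r)) := by
          have h0 : 0 ≤ Real.log (vol G (ball G v 0)) :=
            Real.log_nonneg (by exact_mod_cast hb 0)
          linarith
  · have hA : (vol G (ball G v r) : ℝ) ≤ ((Fintype.card V : ℝ)) * (Fintype.card V : ℝ) := by
      have h1 : vol G (ball G v r) ≤ vol G Finset.univ :=
        my_vol_mono G (Finset.subset_univ _)
      have h2 : vol G Finset.univ ≤ Fintype.card V * Fintype.card V := by
        calc vol G Finset.univ = ∑ u, G.degree u := rfl
          _ ≤ ∑ _u : V, Fintype.card V :=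
              Finset.sum_le_sum fun u _ => (G.degree_lt_card_verts u).le
          _ = Fintype.card V * Fintype.card V := by
              rw [Finset.sum_const, Finset.card_univ, smul_eq_mul]
      exact_mod_cast le_trans h1 h2
    have hn0 : (0:ℝ) < (Fintype.card V : ℝ) := by
      have : 0 < Fintype.card V := by omega
      exact_mod_cast this
    have := Real.log_le_log (by linarith : (0:ℝ) < (vol G (ball G v r) : ℝ)) hA
    rw [Real.log_mul (ne_of_gt hn0) (ne_of_gt hn0)] at this
    linarith
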